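/- A Möbius ladder on n ≥ 4 vertices has a C4-quotient 2-factor if and only if n is divisible by 4. -/

import Mathlib

/-- The possible "ends" of an edge in a pregraph: an ordinary edge (or loop)
with two endpoints, or a semi-edge with a single endpoint. -/
inductive PEnds (V : Type) where
  | edge : V → V → PEnds V
  | semi : V → PEnds V
  deriving DecidableEq

/-- A finite pregraph: a multigraph that may contain loops, parallel edges and
semi-edges.  Edges are abstract and carry their endpoints via `ends`. -/
structure Pregraph where
  V : Type
  E : Type
  [fintypeV : Fintype V]
  [decEqV : DecidableEq V]
  [fintypeE : Fintype E]
  [decEqE : DecidableEq E]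
  ends : E → PEnds V

attribute [instance] Pregraph.fintypeV Pregraph.decEqV Pregraph.fintypeE Pregraph.decEqE

namespace Pregraph

/-- The number of end-points that edge `e` has at the vertex `v`
(a loop at `v` counts twice, a semi-edge once). -/
def endCount (P : Pregraph) (v : P.V) (e : P.E) : ℕ :=
  match P.ends e with
  | .edge a b => (if a = v then 1 else 0) + (if b = v then 1 else 0)
  | .semi a => if a = v then 1 else 0

/-- The degree of a vertex: loops count 2, semi-edges count 1. -/
def degree (P : Pregraph) (v : P.V) : ℕ := ∑ e : P.E, P.endCount v e

open Classical in
/-- The degree of a vertex inside a set `F` of edges. -/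
noncomputable def degIn (P : Pregraph) (F : Set P.E) (v : P.V) : ℕ :=
  ∑ e : P.E, if e ∈ F then P.endCount v e else 0

/-- `e` is a proper edge with endpoints `a` and `b`. -/
def joins (P : Pregraph) (e : P.E) (a b : P.V) : Prop :=
  P.ends e = .edge a b ∨ P.ends e = .edge b a

/-- The edge `e` is incident to the vertex `v`. -/
def incident (P : Pregraph) (e : P.E) (v : P.V) : Prop :=
  match P.ends e with
  | .edge a b => a = v ∨ b = v
  | .semi a => a = v

/-- Adjacency via a proper edge. -/
def Adj (P : Pregraph) (u w : P.V) : Prop := ∃ e, P.joins e u w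

/-- Connectedness of a pregraph. -/
def Connected (P : Pregraph) : Prop := ∀ u w : P.V, Relation.ReflTransGen P.Adj u w

/-- A cubic pregraph: connected and every vertex has degree 3. -/
def Cubic (P : Pregraph) : Prop := P.Connected ∧ ∀ v, P.degree v = 3

/-- The edge `e` has at least one endpoint in the vertex set `C`. -/
def touches (P : Pregraph) (e : P.E) (C : Set P.V) : Prop :=
  match P.ends e with
  | .edge a b => a ∈ C ∨ b ∈ C
  | .semi a => a ∈ C

/-- `C` is a component of the edge set `F` of type `q₁` : a 4-cycle. -/
def IsQ1Comp (P : Pregraph) (F : Set P.E) (C : Set P.V) : Prop :=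
  ∃ a b c d : P.V, a ≠ b ∧ a ≠ c ∧ a ≠ d ∧ b ≠ c ∧ b ≠ d ∧ c ≠ d ∧
    C = {a, b, c, d} ∧
    ∃ e1 e2 e3 e4 : P.E, e1 ≠ e2 ∧ e1 ≠ e3 ∧ e1 ≠ e4 ∧ e2 ≠ e3 ∧ e2 ≠ e4 ∧ e3 ≠ e4 ∧
      {e ∈ F | P.touches e C} = {e1, e2, e3, e4} ∧
      P.joins e1 a b ∧ P.joins e2 b c ∧ P.joins e3 c d ∧ P.joins e4 d a

/-- `C` is a component of the edge set `F` of type `q₂` : a digon. -/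
def IsQ2Comp (P : Pregraph) (F : Set P.E) (C : Set P.V) : Prop :=
  ∃ a b : P.V, a ≠ b ∧ C = {a, b} ∧
    ∃ e1 e2 : P.E, e1 ≠ e2 ∧ {e ∈ F | P.touches e C} = {e1, e2} ∧
      P.joins e1 a b ∧ P.joins e2 a b

/-- `C` is a component of the edge set `F` of type `q₃` : an edge together with
a semi-edge at each endpoint. -/
def IsQ3Comp (P : Pregraph) (F : Set P.E) (C : Set P.V) : Prop :=
  ∃ a b : P.V, a ≠ b ∧ C = {a, b} ∧
    ∃ e1 e2 e3 : P.E, e1 ≠ e2 ∧ e1 ≠ e3 ∧ e2 ≠ e3 ∧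
      {e ∈ F | P.touches e C} = {e1, e2, e3} ∧
      P.joins e1 a b ∧ P.ends e2 = .semi a ∧ P.ends e3 = .semi b

/-- `C` is a component of the edge set `F` of type `q₄` : a single vertex with
two semi-edges. -/
def IsQ4Comp (P : Pregraph) (F : Set P.E) (C : Set P.V) : Prop :=
  ∃ a : P.V, C = {a} ∧
    ∃ e1 e2 : P.E, e1 ≠ e2 ∧ {e ∈ F | P.touches e C} = {e1, e2} ∧
      P.ends e1 = .semi a ∧ P.ends e2 = .semi a

/-- `C` is a component of `F` which is a quotient of `C₄`. -/
def IsCQComp (P : Pregraph) (F : Set P.E) (C : Set P.V) : Prop :=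
  P.IsQ1Comp F C ∨ P.IsQ2Comp F C ∨ P.IsQ3Comp F C ∨ P.IsQ4Comp F C

/-- `F` is a `C₄`-quotient 2-factor with component partition `Ps`. -/
def IsCQFactorWith (P : Pregraph) (F : Set P.E) (Ps : Set (Set P.V)) : Prop :=
  (∀ C ∈ Ps, P.IsCQComp F C) ∧
  (∀ v : P.V, ∃ C ∈ Ps, v ∈ C) ∧
  (∀ C ∈ Ps, ∀ D ∈ Ps, C ≠ D → Disjoint C D)

/-- `F` is a `C₄`-quotient 2-factor: a spanning subgraph in which every vertex has
degree 2 and every component is a quotient of `C₄`. -/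
def IsCQFactor (P : Pregraph) (F : Set P.E) : Prop := ∃ Ps, P.IsCQFactorWith F Ps

/-- The pregraph has a `C₄`-quotient 2-factor. -/
def HasCQFactor (P : Pregraph) : Prop := ∃ F, P.IsCQFactor F

/-- Compatibility of ends under a vertex map (edges are unordered). -/
def endsRel {V W : Type} (σ : V → W) : PEnds V → PEnds W → Prop
  | .edge a b, x => x = .edge (σ a) (σ b) ∨ x = .edge (σ b) (σ a)
  | .semi a, x => x = .semi (σ a)

/-- An isomorphism of pregraphs. -/
structure Iso (P Q : Pregraph) where
  vmap : P.V ≃ Q.V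
  emap : P.E ≃ Q.E
  compat : ∀ e, endsRel vmap (P.ends e) (Q.ends (emap e))

/-- Two edge sets (e.g. two 2-factors) of `P` are isomorphic if some automorphism
of `P` maps one onto the other. -/
def FactorIso (P : Pregraph) (F1 F2 : Set P.E) : Prop :=
  ∃ φ : Iso P P, ∀ e, e ∈ F1 ↔ φ.emap e ∈ F2

/-- Adjacency in the ladder graph `K₂ × Pₙ` on `Fin n × Fin 2`. -/
def ladderAdj (n : ℕ) (p q : Fin n × Fin 2) : Prop :=
  (p.1 = q.1 ∧ p.2 ≠ q.2) ∨ (p.2 = q.2 ∧ ((p.1 : ℕ) + 1 = q.1 ∨ (q.1 : ℕ) + 1 = p.1))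

/-- The subgraph of `P` with vertex set `S` and edge set `F` is isomorphic to the
ladder `K₂ × Pₙ` for some `n ≥ 2`. -/
def IsLadder (P : Pregraph) (S : Set P.V) (F : Set P.E) : Prop :=
  ∃ n : ℕ, 2 ≤ n ∧ ∃ f : Fin n × Fin 2 → P.V, Function.Injective f ∧
    S = Set.range f ∧
    (∀ e ∈ F, ∃ p q, ladderAdj n p q ∧ P.joins e (f p) (f q)) ∧
    (∀ p q, ladderAdj n p q → ∃! e, e ∈ F ∧ P.joins e (f p) (f q))

/-- A ladder of `P`: a maximal subgraph isomorphic to `K₂ × Pₙ`, `n ≥ 2`. -/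
def IsMaxLadder (P : Pregraph) (S : Set P.V) (F : Set P.E) : Prop :=
  P.IsLadder S F ∧
  ∀ S' F', P.IsLadder S' F' → S ⊆ S' → F ⊆ F' → S = S' ∧ F = F'

/-- A digon: two distinct vertices joined by two parallel edges. -/
def IsDigonPair (P : Pregraph) (a b : P.V) : Prop :=
  a ≠ b ∧ ∃ e1 e2 : P.E, e1 ≠ e2 ∧ P.joins e1 a b ∧ P.joins e2 a b

end Pregraph

/-- The Möbius ladder on `2 * m` vertices: vertex `i` is adjacent to `i ± 1` and to
`i + m` (indices mod `2 * m`).  `Sum.inl i` is the cycle edge from `i` to `i + 1`,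
`Sum.inr i` (for `i < m`) is the chord from `i` to `i + m`. -/
def mobiusLadder (m : ℕ) : Pregraph where
  V := Fin (2 * m)
  E := Fin (2 * m) ⊕ Fin m
  ends := fun e =>
    match e with
    | .inl i => .edge i ⟨(i.1 + 1) % (2 * m), Nat.mod_lt _ (by have := i.2; omega)⟩
    | .inr i => .edge ⟨i.1, by have := i.2; omega⟩ ⟨i.1 + m, by have := i.2; omega⟩

section Aux

private lemma mem4S {α : Type} {x a b c d : α} :
    x ∈ ({a, b, c, d} : Set α) ↔ x = a ∨ x = b ∨ x = c ∨ x = d := by simp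

private lemma touches_inl (m : ℕ) (j : Fin (2*m)) (C : Set (Fin (2*m))) :
    (mobiusLadder m).touches (Sum.inl j) C ↔
      @Membership.mem (Fin (2*m)) (Set (Fin (2*m))) Set.instMembership C j ∨
      @Membership.mem (Fin (2*m)) (Set (Fin (2*m))) Set.instMembership C
        ⟨(j.1 + 1) % (2*m), Nat.mod_lt _ (by have := j.2; omega)⟩ := Iff.rfl

private lemma touches_inr (m : ℕ) (j : Fin m) (C : Set (Fin (2*m))) :
    (mobiusLadder m).touches (Sum.inr j) C ↔
      @Membership.mem (Fin (2*m)) (Set (Fin (2*m))) Set.instMembership C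
        ⟨j.1, by have := j.2; omega⟩ ∨
      @Membership.mem (Fin (2*m)) (Set (Fin (2*m))) Set.instMembership C
        ⟨j.1 + m, by have := j.2; omega⟩ := Iff.rfl

private lemma mem4F {α : Type} [DecidableEq α] {x a b c d : α} :
    x ∈ ({a, b, c, d} : Finset α) ↔ x = a ∨ x = b ∨ x = c ∨ x = d := by simp

private lemma mod1 (m x : ℕ) (h : x < 2*m) :
    (x+1) % (2*m) = x+1 ∨ ((x+1) % (2*m) = 0 ∧ x+1 = 2*m) := by
  rcases Nat.lt_or_ge (x+1) (2*m) with h'|h'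
  · exact Or.inl (Nat.mod_eq_of_lt h')
  · right
    have hx : x + 1 = 2*m := by omega
    simp [hx]

private lemma mob_no_semi (m : ℕ) (e : (mobiusLadder m).E) (x : Fin (2*m)) :
    (mobiusLadder m).ends e ≠ .semi x := by
  cases e <;> simp [mobiusLadder]

private lemma mob_unique (m : ℕ) (hm : 2 ≤ m) {e1 e2 : (mobiusLadder m).E} {a b : Fin (2*m)}
    (h1 : (mobiusLadder m).joins e1 a b) (h2 : (mobiusLadder m).joins e2 a b) : e1 = e2 := by
  rcases e1 with i | i <;> rcases e2 with j | j <;>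
    simp only [Pregraph.joins, mobiusLadder, PEnds.edge.injEq, Fin.ext_iff] at h1 h2 ⊢
  · have hi := i.2; have hj := j.2
    rcases mod1 m i.1 hi with h3 | ⟨h3, h3'⟩ <;> rcases mod1 m j.1 hj with h4 | ⟨h4, h4'⟩ <;>
      simp only [Sum.inl.injEq, Fin.ext_iff] <;> omega
  · exfalso
    have hi := i.2; have hj := j.2
    rcases mod1 m i.1 hi with h3 | ⟨h3, h3'⟩ <;> omega
  · exfalso
    have hi := i.2; have hj := j.2
    rcases mod1 m j.1 hj with h4 | ⟨h4, h4'⟩ <;> omega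
  · have hi := i.2; have hj := j.2
    simp only [Sum.inr.injEq, Fin.ext_iff]
    omega

private lemma mob_fwd (m : ℕ) (hm : 2 ≤ m) (h : (mobiusLadder m).HasCQFactor) : 4 ∣ 2 * m := by
  classical
  obtain ⟨F, Ps, hcomp, hcover, hdisj⟩ := h
  -- every component is a 4-cycle
  have hQ1 : ∀ C ∈ Ps, ∃ a b c d : Fin (2*m),
      a ≠ b ∧ a ≠ c ∧ a ≠ d ∧ b ≠ c ∧ b ≠ d ∧ c ≠ d ∧ C = {a, b, c, d} := by
    intro C hC
    rcases hcomp C hC with h | h | h | h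
    · obtain ⟨a,b,c,d,h1,h2,h3,h4,h5,h6,h7,-⟩ := h
      exact ⟨a,b,c,d,h1,h2,h3,h4,h5,h6,h7⟩
    · obtain ⟨a,b,-,-,e1,e2,hne,-,hj1,hj2⟩ := h
      exact absurd (mob_unique m hm hj1 hj2) hne
    · obtain ⟨a,b,-,-,e1,e2,e3,-,-,-,-,-,hs,-⟩ := h
      exact absurd hs (mob_no_semi m e2 a)
    · obtain ⟨a,-,e1,e2,-,-,hs,-⟩ := h
      exact absurd hs (mob_no_semi m e1 a)
  have hfin : Ps.Finite := Set.toFinite Ps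
  choose g hg1 hg2 using hcover
  have hmem : ∀ (v : Fin (2*m)) (C : Set (Fin (2*m))), C ∈ Ps → (v ∈ C ↔ g v = C) := by
    intro v C hC
    constructor
    · intro hv
      by_contra hne
      exact Set.disjoint_left.mp (hdisj (g v) (hg1 v) C hC hne) (hg2 v) hv
    · rintro rfl; exact hg2 v
  have hfib : ∀ C ∈ hfin.toFinset, (Finset.univ.filter (fun v => g v = C)).card = 4 := by
    intro C hC
    rw [Set.Finite.mem_toFinset] at hC
    obtain ⟨a,b,c,d,h1,h2,h3,h4,h5,h6,hCeq⟩ := hQ1 C hC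
    have : Finset.univ.filter (fun v => g v = C) = {a,b,c,d} := by
      ext v
      simp only [Finset.mem_filter, Finset.mem_univ, true_and, Finset.mem_insert,
        Finset.mem_singleton]
      rw [← hmem v C hC, hCeq]
      exact (mem4S (α := Fin (2*m))).trans (mem4F (α := Fin (2*m))).symm
    rw [this]
    change ({a,b,c,d} : Finset (Fin (2*m))).card = 4
    rw [Finset.card_insert_of_notMem (by simp [h1,h2,h3]),
      Finset.card_insert_of_notMem (by simp [h4,h5]), Finset.card_pair h6]
  have hsum : (Finset.univ : Finset (Fin (2*m))).card =
      ∑ C ∈ hfin.toFinset, (Finset.univ.filter (fun v => g v = C)).card :=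
    Finset.card_eq_sum_card_fiberwise (fun v _ => (Set.Finite.mem_toFinset hfin).mpr (hg1 v))
  rw [Finset.card_univ, Fintype.card_fin] at hsum
  rw [Finset.sum_congr rfl hfib, Finset.sum_const, smul_eq_mul] at hsum
  exact ⟨hfin.toFinset.card, by omega⟩
private def mv (m : ℕ) (hm : 2 ≤ m) (i : ℕ) : Fin (2*m) := ⟨i % (2*m), Nat.mod_lt _ (by omega)⟩

private def mw (m : ℕ) (hm : 2 ≤ m) (i : ℕ) : Fin m := ⟨i % m, Nat.mod_lt _ (by omega)⟩

private lemma mv_val (m : ℕ) (hm : 2 ≤ m) (i : ℕ) (h : i < 2*m) : (mv m hm i).1 = i :=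
  Nat.mod_eq_of_lt h

private lemma mw_val (m : ℕ) (hm : 2 ≤ m) (i : ℕ) (h : i < m) : (mw m hm i).1 = i :=
  Nat.mod_eq_of_lt h

private lemma mv_eq_iff (m : ℕ) (hm : 2 ≤ m) (x : Fin (2*m)) (k : ℕ) (hk : k < 2*m) :
    x = mv m hm k ↔ x.1 = k := by
  rw [Fin.ext_iff, mv_val m hm k hk]

private lemma mv_ne (m : ℕ) (hm : 2 ≤ m) {i j : ℕ} (hi : i < 2*m) (hj : j < 2*m) (h : i ≠ j) :
    mv m hm i ≠ mv m hm j := by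
  intro he
  exact h (by rw [← mv_val m hm i hi, ← mv_val m hm j hj, he])

private lemma joins_inl (m : ℕ) (hm : 2 ≤ m) (i : ℕ) (h : i + 1 < 2*m) :
    (mobiusLadder m).joins (Sum.inl (mv m hm i)) (mv m hm i) (mv m hm (i+1)) := by
  left
  show PEnds.edge _ _ = _
  congr 1
  apply Fin.ext
  simp only [mv_val m hm i (by omega), mv_val m hm (i+1) (by omega)]
  exact Nat.mod_eq_of_lt h

private lemma joins_inr (m : ℕ) (hm : 2 ≤ m) (i : ℕ) (h : i < m) :
    (mobiusLadder m).joins (Sum.inr (mw m hm i)) (mv m hm i) (mv m hm (i+m)) := by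
  left
  show PEnds.edge _ _ = _
  congr 1 <;> apply Fin.ext
  · show (mw m hm i).1 = (mv m hm i).1
    rw [mw_val m hm i h, mv_val m hm i (by omega)]
  · show (mw m hm i).1 + m = (mv m hm (i+m)).1
    rw [mw_val m hm i h, mv_val m hm (i+m) (by omega)]

private lemma mob_bwd (m : ℕ) (hm : 2 ≤ m) (hdvd : 4 ∣ 2 * m) : (mobiusLadder m).HasCQFactor := by
  have hm2 : m % 2 = 0 := by omega
  refine ⟨{e | Sum.elim (fun j : Fin (2*m) => j.1 % 2 = 0) (fun _ => True) e},
    {C | ∃ i, i < m ∧ i % 2 = 0 ∧ C = {mv m hm i, mv m hm (i+1), mv m hm (i+m+1), mv m hm (i+m)}},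
    ?_, ?_, ?_⟩
  · rintro C ⟨i, hi, hie, rfl⟩
    have hi1 : i + 1 < m := by omega
    left
    refine ⟨mv m hm i, mv m hm (i+1), mv m hm (i+m+1), mv m hm (i+m),
      mv_ne m hm (by omega) (by omega) (by omega), mv_ne m hm (by omega) (by omega) (by omega),
      mv_ne m hm (by omega) (by omega) (by omega), mv_ne m hm (by omega) (by omega) (by omega),
      mv_ne m hm (by omega) (by omega) (by omega), mv_ne m hm (by omega) (by omega) (by omega),
      rfl,
      Sum.inl (mv m hm i), Sum.inr (mw m hm (i+1)), Sum.inl (mv m hm (i+m)), Sum.inr (mw m hm i),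
      ?_, fun h => mv_ne m hm (by omega) (by omega) (by omega) (Sum.inl.inj h), ?_, ?_, ?_,
      ?_, ?_, ?_, ?_, ?_, ?_⟩
    · exact Sum.inl_ne_inr
    · exact Sum.inl_ne_inr
    · exact Sum.inr_ne_inl
    · intro h
      have := congrArg Fin.val (Sum.inr.inj h)
      rw [mw_val m hm (i+1) hi1, mw_val m hm i (by omega)] at this
      omega
    · exact Sum.inl_ne_inr
    · -- set equality
      show {e : Fin (2*m) ⊕ Fin m | Sum.elim (fun j : Fin (2*m) => j.1 % 2 = 0) (fun _ => True) e ∧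
          (mobiusLadder m).touches e
            ({mv m hm i, mv m hm (i+1), mv m hm (i+m+1), mv m hm (i+m)} : Set (Fin (2*m)))} =
        ({Sum.inl (mv m hm i), Sum.inr (mw m hm (i+1)), Sum.inl (mv m hm (i+m)), Sum.inr (mw m hm i)} :
          Set (Fin (2*m) ⊕ Fin m))
      ext e
      rcases e with j | j
      · have hj := j.2
        rcases mod1 m j.1 hj with hmj | ⟨hmj, hmj'⟩ <;>
          · simp only [Set.mem_setOf_eq, Set.mem_insert_iff, Set.mem_singleton_iff,
              touches_inl, Sum.elim_inl,
              mv_eq_iff m hm _ i (by omega), mv_eq_iff m hm _ (i+1) (by omega),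
              mv_eq_iff m hm _ (i+m+1) (by omega), mv_eq_iff m hm _ (i+m) (by omega),
              Sum.inl.injEq, Fin.ext_iff, mv_val m hm i (by omega), mv_val m hm (i+m) (by omega),
              reduceCtorEq, or_false, false_or, hmj]
            omega
      · have hj := j.2
        simp only [Set.mem_setOf_eq, Set.mem_insert_iff, Set.mem_singleton_iff,
          touches_inr, Sum.elim_inr,
          mv_eq_iff m hm _ i (by omega), mv_eq_iff m hm _ (i+1) (by omega),
          mv_eq_iff m hm _ (i+m+1) (by omega), mv_eq_iff m hm _ (i+m) (by omega),
          Sum.inr.injEq, Fin.ext_iff, mw_val m hm (i+1) hi1, mw_val m hm i (by omega),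
          reduceCtorEq, or_false, false_or, true_and]
        omega
    · exact joins_inl m hm i (by omega)
    · rw [show i + m + 1 = i + 1 + m by omega]
      exact joins_inr m hm (i+1) hi1
    · rcases joins_inl m hm (i+m) (by omega) with h | h
      · exact Or.inr h
      · exact Or.inl h
    · rcases joins_inr m hm i (by omega) with h | h
      · exact Or.inr h
      · exact Or.inl h
  · intro (v : Fin (2*m))
    have hv := v.2
    by_cases hvm : v.1 < m
    · refine ⟨_, ⟨v.1 - v.1 % 2, by omega, by omega, rfl⟩, ?_⟩
      refine (mem4S (α := Fin (2*m))).2 ?_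
      simp only [Set.mem_insert_iff, Set.mem_singleton_iff,
        mv_eq_iff m hm _ (v.1 - v.1 % 2) (by omega),
        mv_eq_iff m hm _ (v.1 - v.1 % 2 + 1) (by omega),
        mv_eq_iff m hm _ (v.1 - v.1 % 2 + m + 1) (by omega),
        mv_eq_iff m hm _ (v.1 - v.1 % 2 + m) (by omega)]
      omega
    · refine ⟨_, ⟨(v.1 - m) - (v.1 - m) % 2, by omega, by omega, rfl⟩, ?_⟩
      refine (mem4S (α := Fin (2*m))).2 ?_
      simp only [Set.mem_insert_iff, Set.mem_singleton_iff,
        mv_eq_iff m hm _ (v.1 - m - (v.1 - m) % 2) (by omega),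
        mv_eq_iff m hm _ (v.1 - m - (v.1 - m) % 2 + 1) (by omega),
        mv_eq_iff m hm _ (v.1 - m - (v.1 - m) % 2 + m + 1) (by omega),
        mv_eq_iff m hm _ (v.1 - m - (v.1 - m) % 2 + m) (by omega)]
      omega
  · rintro C ⟨i, hi, hie, rfl⟩ D ⟨j, hj, hje, rfl⟩ hne
    have hij : i ≠ j := by rintro rfl; exact hne rfl
    rw [Set.disjoint_left]
    intro (x : Fin (2*m)) hx hx'
    replace hx := (mem4S (α := Fin (2*m))).1 hx
    replace hx' := (mem4S (α := Fin (2*m))).1 hx'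
    simp only [Set.mem_insert_iff, Set.mem_singleton_iff,
      mv_eq_iff m hm _ i (by omega), mv_eq_iff m hm _ (i+1) (by omega),
      mv_eq_iff m hm _ (i+m+1) (by omega), mv_eq_iff m hm _ (i+m) (by omega)] at hx
    simp only [Set.mem_insert_iff, Set.mem_singleton_iff,
      mv_eq_iff m hm _ j (by omega), mv_eq_iff m hm _ (j+1) (by omega),
      mv_eq_iff m hm _ (j+m+1) (by omega), mv_eq_iff m hm _ (j+m) (by omega)] at hx'
    omega
end Aux

/-- A Möbius ladder on `n = 2 * m ≥ 4` vertices has a `C₄`-quotient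
2-factor if and only if `n` is divisible by 4. -/
theorem mobiusLadder_hasCQFactor_iff (m : ℕ) (hm : 2 ≤ m) :
    (mobiusLadder m).HasCQFactor ↔ 4 ∣ 2 * m := ⟨mob_fwd m hm, mob_bwd m hm⟩
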